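/- Let F : L²(0,1) → L²(0,1) be defined by (Fu)(t) = -c₀ exp(-∫₀ᵗ u(s) ds) with c₀ > 0, and let κ > 0. Then F is cocoercive on M_κ = {u ∈ L²(0,1) : u ≥ κ a.e.} with constant τ = κ/(2c₀), i.e., ⟨Fu - Fv, u - v⟩ ≥ (κ/(2c₀))‖Fu - Fv‖² for all u, v ∈ M_κ. -/

import Mathlib

open RealInnerProductSpace MeasureTheory Set intervalIntegral Filter

lemma ftc_cont (u v : ℝ → ℝ) (hu : Continuous u) (hv : Continuous v)
    (P P₁ P₂ : ℝ → ℝ → ℝ)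
    (hP : ∀ p : ℝ × ℝ, HasFDerivAt (fun q : ℝ × ℝ => P q.1 q.2)
       (P₁ p.1 p.2 • ContinuousLinearMap.fst ℝ ℝ ℝ + P₂ p.1 p.2 • ContinuousLinearMap.snd ℝ ℝ ℝ) p)
    (hP₁ : Continuous fun p : ℝ × ℝ => P₁ p.1 p.2)
    (hP₂ : Continuous fun p : ℝ × ℝ => P₂ p.1 p.2) :
    ∫ t in (0:ℝ)..1, (u t * P₁ (∫ s in (0:ℝ)..t, u s) (∫ s in (0:ℝ)..t, v s)
        + v t * P₂ (∫ s in (0:ℝ)..t, u s) (∫ s in (0:ℝ)..t, v s))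
      = P (∫ s in (0:ℝ)..1, u s) (∫ s in (0:ℝ)..1, v s) - P 0 0 := by
  set A : ℝ → ℝ := fun t => ∫ s in (0:ℝ)..t, u s with hA
  set B : ℝ → ℝ := fun t => ∫ s in (0:ℝ)..t, v s with hB
  have hAc : Continuous A := intervalIntegral.continuous_primitive (fun a b => hu.intervalIntegrable a b) 0
  have hBc : Continuous B := intervalIntegral.continuous_primitive (fun a b => hv.intervalIntegrable a b) 0
  have hderiv : ∀ t ∈ uIcc (0:ℝ) 1,
      HasDerivAt (fun t => P (A t) (B t)) (u t * P₁ (A t) (B t) + v t * P₂ (A t) (B t)) t := by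
    intro t _
    have hAd : HasDerivAt A (u t) t :=
      intervalIntegral.integral_hasDerivAt_right (hu.intervalIntegrable 0 t)
        (hu.stronglyMeasurableAtFilter _ _) hu.continuousAt
    have hBd : HasDerivAt B (v t) t :=
      intervalIntegral.integral_hasDerivAt_right (hv.intervalIntegrable 0 t)
        (hv.stronglyMeasurableAtFilter _ _) hv.continuousAt
    have hpath : HasDerivAt (fun t => (A t, B t)) (u t, v t) t := hAd.prodMk hBd
    have := (hP (A t, B t)).comp_hasDerivAt t hpath
    simpa [mul_comm, Function.comp_def] using this
  have hint : IntervalIntegrable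
      (fun t => u t * P₁ (A t) (B t) + v t * P₂ (A t) (B t)) volume 0 1 :=
    (((hu.mul (hP₁.comp (hAc.prodMk hBc)))).add
      ((hv.mul (hP₂.comp (hAc.prodMk hBc))))).intervalIntegrable 0 1
  have := intervalIntegral.integral_eq_sub_of_hasDerivAt hderiv hint
  simpa [hA, hB] using this

lemma ftc_key (u v : ℝ → ℝ) (hu : Integrable u) (hv : Integrable v)
    (P P₁ P₂ : ℝ → ℝ → ℝ)
    (hP : ∀ p : ℝ × ℝ, HasFDerivAt (fun q : ℝ × ℝ => P q.1 q.2)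
       (P₁ p.1 p.2 • ContinuousLinearMap.fst ℝ ℝ ℝ + P₂ p.1 p.2 • ContinuousLinearMap.snd ℝ ℝ ℝ) p)
    (hP₁ : Continuous fun p : ℝ × ℝ => P₁ p.1 p.2)
    (hP₂ : Continuous fun p : ℝ × ℝ => P₂ p.1 p.2) :
    ∫ t in Ioc (0:ℝ) 1, (u t * P₁ (∫ s in (0:ℝ)..t, u s) (∫ s in (0:ℝ)..t, v s)
        + v t * P₂ (∫ s in (0:ℝ)..t, u s) (∫ s in (0:ℝ)..t, v s))
      = P (∫ s in (0:ℝ)..1, u s) (∫ s in (0:ℝ)..1, v s) - P 0 0 := by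
  -- approximating sequences
  have Happrox : ∀ (f : ℝ → ℝ), Integrable f → ∀ n : ℕ, ∃ g : ℝ → ℝ,
      Continuous g ∧ (∫ x, ‖f x - g x‖) ≤ 1/((n:ℝ)+1) ∧ Integrable g := by
    intro f hf n
    obtain ⟨g, _, hle, hc, hint⟩ := hf.exists_hasCompactSupport_integral_sub_le
      (by positivity : (0:ℝ) < 1/((n:ℝ)+1))
    exact ⟨g, hc, hle, hint⟩
  choose un hunc hun hunint using Happrox u hu
  choose vn hvnc hvn hvnint using Happrox v hv
  set A : ℝ → ℝ := fun t => ∫ s in (0:ℝ)..t, u s with hA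
  set B : ℝ → ℝ := fun t => ∫ s in (0:ℝ)..t, v s with hB
  set An : ℕ → ℝ → ℝ := fun n t => ∫ s in (0:ℝ)..t, un n s with hAn
  set Bn : ℕ → ℝ → ℝ := fun n t => ∫ s in (0:ℝ)..t, vn n s with hBn
  have key_est : ∀ (f g : ℝ → ℝ), Integrable f → Integrable g → ∀ t ∈ Icc (0:ℝ) 1,
      ‖(∫ s in (0:ℝ)..t, f s) - ∫ s in (0:ℝ)..t, g s‖ ≤ ∫ x, ‖f x - g x‖ := by
    intro f g hf hg t ht
    rw [← intervalIntegral.integral_sub hf.intervalIntegrable hg.intervalIntegrable]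
    calc ‖∫ s in (0:ℝ)..t, (f s - g s)‖
        ≤ ∫ s in (0:ℝ)..t, ‖f s - g s‖ :=
          intervalIntegral.norm_integral_le_integral_norm ht.1
      _ = ∫ s in Ioc (0:ℝ) t, ‖f s - g s‖ := intervalIntegral.integral_of_le ht.1
      _ ≤ ∫ x, ‖f x - g x‖ :=
          setIntegral_le_integral (hf.sub hg).norm (.of_forall fun x => norm_nonneg _)
  have hestA : ∀ n, ∀ t ∈ Icc (0:ℝ) 1, ‖An n t - A t‖ ≤ 1/((n:ℝ)+1) := by
    intro n t ht
    refine le_trans (key_est (un n) u (hunint n) hu t ht) ?_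
    calc (∫ x, ‖un n x - u x‖) = ∫ x, ‖u x - un n x‖ := by
          simp only [norm_sub_rev]
      _ ≤ 1/((n:ℝ)+1) := hun n
  have hestB : ∀ n, ∀ t ∈ Icc (0:ℝ) 1, ‖Bn n t - B t‖ ≤ 1/((n:ℝ)+1) := by
    intro n t ht
    refine le_trans (key_est (vn n) v (hvnint n) hv t ht) ?_
    calc (∫ x, ‖vn n x - v x‖) = ∫ x, ‖v x - vn n x‖ := by
          simp only [norm_sub_rev]
      _ ≤ 1/((n:ℝ)+1) := hvn n
  have hAbd : ∀ t ∈ Icc (0:ℝ) 1, ‖A t‖ ≤ ∫ x, ‖u x‖ := by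
    intro t ht
    have := key_est u 0 hu (integrable_zero _ _ _) t ht
    simpa using this
  have hBbd : ∀ t ∈ Icc (0:ℝ) 1, ‖B t‖ ≤ ∫ x, ‖v x‖ := by
    intro t ht
    have := key_est v 0 hv (integrable_zero _ _ _) t ht
    simpa using this
  set R : ℝ := (∫ x, ‖u x‖) + (∫ x, ‖v x‖) + 1 with hR
  have hu_nn : 0 ≤ ∫ x, ‖u x‖ := integral_nonneg fun x => norm_nonneg _
  have hv_nn : 0 ≤ ∫ x, ‖v x‖ := integral_nonneg fun x => norm_nonneg _
  have hRpos : 0 < R := by positivity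
  have hmemA : ∀ n, ∀ t ∈ Icc (0:ℝ) 1, An n t ∈ Icc (-R) R := by
    intro n t ht
    have h1 : ‖An n t‖ ≤ 1/((n:ℝ)+1) + ∫ x, ‖u x‖ := by
      calc ‖An n t‖ = ‖(An n t - A t) + A t‖ := by rw [sub_add_cancel]
        _ ≤ ‖An n t - A t‖ + ‖A t‖ := norm_add_le _ _
        _ ≤ 1/((n:ℝ)+1) + ∫ x, ‖u x‖ := add_le_add (hestA n t ht) (hAbd t ht)
    have h2 : (1:ℝ)/((n:ℝ)+1) ≤ 1 := by
      rw [div_le_one (by positivity)]; linarith [Nat.cast_nonneg (α := ℝ) n]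
    have : ‖An n t‖ ≤ R := by rw [hR]; linarith
    exact ⟨neg_le_of_abs_le this, le_of_abs_le this⟩
  have hmemB : ∀ n, ∀ t ∈ Icc (0:ℝ) 1, Bn n t ∈ Icc (-R) R := by
    intro n t ht
    have h1 : ‖Bn n t‖ ≤ 1/((n:ℝ)+1) + ∫ x, ‖v x‖ := by
      calc ‖Bn n t‖ = ‖(Bn n t - B t) + B t‖ := by rw [sub_add_cancel]
        _ ≤ ‖Bn n t - B t‖ + ‖B t‖ := norm_add_le _ _
        _ ≤ 1/((n:ℝ)+1) + ∫ x, ‖v x‖ := add_le_add (hestB n t ht) (hBbd t ht)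
    have h2 : (1:ℝ)/((n:ℝ)+1) ≤ 1 := by
      rw [div_le_one (by positivity)]; linarith [Nat.cast_nonneg (α := ℝ) n]
    have : ‖Bn n t‖ ≤ R := by rw [hR]; linarith
    exact ⟨neg_le_of_abs_le this, le_of_abs_le this⟩
  have hmemA' : ∀ t ∈ Icc (0:ℝ) 1, A t ∈ Icc (-R) R := by
    intro t ht
    have : ‖A t‖ ≤ R := by have := hAbd t ht; rw [hR]; linarith
    exact ⟨neg_le_of_abs_le this, le_of_abs_le this⟩
  have hmemB' : ∀ t ∈ Icc (0:ℝ) 1, B t ∈ Icc (-R) R := by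
    intro t ht
    have : ‖B t‖ ≤ R := by have := hBbd t ht; rw [hR]; linarith
    exact ⟨neg_le_of_abs_le this, le_of_abs_le this⟩
  -- bound on P₁ P₂ on the compact square
  set K : Set (ℝ × ℝ) := Icc (-R) R ×ˢ Icc (-R) R with hK
  have hKc : IsCompact K := isCompact_Icc.prod isCompact_Icc
  obtain ⟨C₁, hC₁⟩ := hKc.exists_bound_of_continuousOn hP₁.continuousOn
  obtain ⟨C₂, hC₂⟩ := hKc.exists_bound_of_continuousOn hP₂.continuousOn
  set C : ℝ := max C₁ C₂ with hC
  have hK00 : ((0:ℝ), (0:ℝ)) ∈ K := by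
    have h0 : (0:ℝ) ∈ Icc (-R) R := ⟨by linarith, by linarith⟩
    rw [hK]; exact Set.mk_mem_prod h0 h0
  have hC0 : 0 ≤ C := le_trans (norm_nonneg _) (le_trans (hC₁ _ hK00) (le_max_left _ _))
  have hCP₁ : ∀ p ∈ K, ‖P₁ p.1 p.2‖ ≤ C := fun p hp => le_trans (hC₁ p hp) (le_max_left _ _)
  have hCP₂ : ∀ p ∈ K, ‖P₂ p.1 p.2‖ ≤ C := fun p hp => le_trans (hC₂ p hp) (le_max_right _ _)
  -- continuity of primitives
  have hAnc : ∀ n, Continuous (An n) := fun n =>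
    intervalIntegral.continuous_primitive (fun a b => (hunc n).intervalIntegrable a b) 0
  have hBnc : ∀ n, Continuous (Bn n) := fun n =>
    intervalIntegral.continuous_primitive (fun a b => (hvnc n).intervalIntegrable a b) 0
  have hAc : Continuous A := hu.continuous_primitive 0
  have hBc : Continuous B := hv.continuous_primitive 0
  set ν : Measure ℝ := volume.restrict (Ioc (0:ℝ) 1) with hν
  -- a.e. bounds for the P₁/P₂ compositions
  have hbddP₁ : ∀ n, ∀ᵐ t ∂ν, ‖P₁ (An n t) (Bn n t)‖ ≤ C := by
    intro n
    filter_upwards [ae_restrict_mem measurableSet_Ioc] with t ht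
    exact hCP₁ (An n t, Bn n t)
      (Set.mk_mem_prod (hmemA n t (Ioc_subset_Icc_self ht)) (hmemB n t (Ioc_subset_Icc_self ht)))
  have hbddP₂ : ∀ n, ∀ᵐ t ∂ν, ‖P₂ (An n t) (Bn n t)‖ ≤ C := by
    intro n
    filter_upwards [ae_restrict_mem measurableSet_Ioc] with t ht
    exact hCP₂ (An n t, Bn n t)
      (Set.mk_mem_prod (hmemA n t (Ioc_subset_Icc_self ht)) (hmemB n t (Ioc_subset_Icc_self ht)))
  -- integrability of products
  have hprod : ∀ (f : ℝ → ℝ), Integrable f volume → ∀ (g : ℝ → ℝ),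
      (∀ᵐ t ∂ν, ‖g t‖ ≤ C) → AEStronglyMeasurable g ν →
      Integrable (fun t => f t * g t) ν := by
    intro f hf g hg hgm
    have := Integrable.bdd_mul (c := C) hf.restrict hgm hg
    exact this.congr (Filter.Eventually.of_forall fun t => mul_comm _ _)
  have measP₁ : ∀ n, AEStronglyMeasurable (fun t => P₁ (An n t) (Bn n t)) ν := fun n =>
    (hP₁.comp ((hAnc n).prodMk (hBnc n))).aestronglyMeasurable
  have measP₂ : ∀ n, AEStronglyMeasurable (fun t => P₂ (An n t) (Bn n t)) ν := fun n =>
    (hP₂.comp ((hAnc n).prodMk (hBnc n))).aestronglyMeasurable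
  have hGnint : ∀ n, Integrable
      (fun t => u t * P₁ (An n t) (Bn n t) + v t * P₂ (An n t) (Bn n t)) ν := fun n =>
    (hprod u hu _ (hbddP₁ n) (measP₁ n)).add (hprod v hv _ (hbddP₂ n) (measP₂ n))
  have hFnint : ∀ n, Integrable
      (fun t => un n t * P₁ (An n t) (Bn n t) + vn n t * P₂ (An n t) (Bn n t)) ν := fun n =>
    (hprod (un n) (hunint n) _ (hbddP₁ n) (measP₁ n)).add
      (hprod (vn n) (hvnint n) _ (hbddP₂ n) (measP₂ n))
  -- Step 1 : exact identity for the approximations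
  have hIn : ∀ n, (∫ t in Ioc (0:ℝ) 1,
        (un n t * P₁ (An n t) (Bn n t) + vn n t * P₂ (An n t) (Bn n t)))
      = P (An n 1) (Bn n 1) - P 0 0 := by
    intro n
    have h := ftc_cont (un n) (vn n) (hunc n) (hvnc n) P P₁ P₂ hP hP₁ hP₂
    rwa [intervalIntegral.integral_of_le zero_le_one] at h
  -- Step 2 : convergence of the right-hand sides
  have h1icc : (1:ℝ) ∈ Icc (0:ℝ) 1 := by norm_num
  have htA1 : Filter.Tendsto (fun n => An n 1) atTop (nhds (A 1)) := by
    rw [← tendsto_sub_nhds_zero_iff]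
    exact squeeze_zero_norm (fun n => hestA n 1 h1icc) tendsto_one_div_add_atTop_nhds_zero_nat
  have htB1 : Filter.Tendsto (fun n => Bn n 1) atTop (nhds (B 1)) := by
    rw [← tendsto_sub_nhds_zero_iff]
    exact squeeze_zero_norm (fun n => hestB n 1 h1icc) tendsto_one_div_add_atTop_nhds_zero_nat
  have hPc : Continuous fun q : ℝ × ℝ => P q.1 q.2 := by
    rw [continuous_iff_continuousAt]; exact fun p => (hP p).differentiableAt.continuousAt
  have h2 : Filter.Tendsto (fun n => P (An n 1) (Bn n 1) - P 0 0) atTop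
      (nhds (P (A 1) (B 1) - P 0 0)) :=
    ((hPc.tendsto ((A 1), (B 1))).comp (htA1.prodMk_nhds htB1)).sub_const _
  -- Step 3a : comparison of integrals with u,v replaced by un,vn
  have h3a : ∀ n, ‖(∫ t in Ioc (0:ℝ) 1,
        (un n t * P₁ (An n t) (Bn n t) + vn n t * P₂ (An n t) (Bn n t)))
      - ∫ t in Ioc (0:ℝ) 1,
        (u t * P₁ (An n t) (Bn n t) + v t * P₂ (An n t) (Bn n t))‖
      ≤ C * (1/((n:ℝ)+1)) + C * (1/((n:ℝ)+1)) := by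
    intro n
    rw [← integral_sub (hFnint n) (hGnint n)]
    have hintun : Integrable (fun t => C * ‖un n t - u t‖) ν :=
      (((hunint n).sub hu).norm.const_mul C).restrict
    have hintvn : Integrable (fun t => C * ‖vn n t - v t‖) ν :=
      (((hvnint n).sub hv).norm.const_mul C).restrict
    calc ‖∫ t in Ioc (0:ℝ) 1,
          ((un n t * P₁ (An n t) (Bn n t) + vn n t * P₂ (An n t) (Bn n t))
            - (u t * P₁ (An n t) (Bn n t) + v t * P₂ (An n t) (Bn n t)))‖
        ≤ ∫ t in Ioc (0:ℝ) 1,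
            ‖(un n t * P₁ (An n t) (Bn n t) + vn n t * P₂ (An n t) (Bn n t))
            - (u t * P₁ (An n t) (Bn n t) + v t * P₂ (An n t) (Bn n t))‖ :=
          norm_integral_le_integral_norm _
      _ ≤ ∫ t in Ioc (0:ℝ) 1, (C * ‖un n t - u t‖ + C * ‖vn n t - v t‖) := by
          refine integral_mono_ae ((hFnint n).sub (hGnint n)).norm (hintun.add hintvn) ?_
          filter_upwards [hbddP₁ n, hbddP₂ n] with t h1 h2
          have heq : (un n t * P₁ (An n t) (Bn n t) + vn n t * P₂ (An n t) (Bn n t))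
              - (u t * P₁ (An n t) (Bn n t) + v t * P₂ (An n t) (Bn n t))
              = (un n t - u t) * P₁ (An n t) (Bn n t)
                + (vn n t - v t) * P₂ (An n t) (Bn n t) := by ring
          rw [heq]
          calc ‖(un n t - u t) * P₁ (An n t) (Bn n t)
                + (vn n t - v t) * P₂ (An n t) (Bn n t)‖
              ≤ ‖(un n t - u t) * P₁ (An n t) (Bn n t)‖
                + ‖(vn n t - v t) * P₂ (An n t) (Bn n t)‖ := norm_add_le _ _
            _ = ‖un n t - u t‖ * ‖P₁ (An n t) (Bn n t)‖
                + ‖vn n t - v t‖ * ‖P₂ (An n t) (Bn n t)‖ := by rw [norm_mul, norm_mul]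
            _ ≤ C * ‖un n t - u t‖ + C * ‖vn n t - v t‖ := by
                have e1 : ‖un n t - u t‖ * ‖P₁ (An n t) (Bn n t)‖ ≤ ‖un n t - u t‖ * C :=
                  mul_le_mul_of_nonneg_left h1 (norm_nonneg _)
                have e2 : ‖vn n t - v t‖ * ‖P₂ (An n t) (Bn n t)‖ ≤ ‖vn n t - v t‖ * C :=
                  mul_le_mul_of_nonneg_left h2 (norm_nonneg _)
                nlinarith [norm_nonneg (un n t - u t), norm_nonneg (vn n t - v t)]
      _ = (∫ t in Ioc (0:ℝ) 1, C * ‖un n t - u t‖)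
          + ∫ t in Ioc (0:ℝ) 1, C * ‖vn n t - v t‖ := integral_add hintun hintvn
      _ = C * (∫ t in Ioc (0:ℝ) 1, ‖un n t - u t‖)
          + C * ∫ t in Ioc (0:ℝ) 1, ‖vn n t - v t‖ := by
          rw [MeasureTheory.integral_const_mul, MeasureTheory.integral_const_mul]
      _ ≤ C * (1/((n:ℝ)+1)) + C * (1/((n:ℝ)+1)) := by
          have e1 : (∫ t in Ioc (0:ℝ) 1, ‖un n t - u t‖) ≤ 1/((n:ℝ)+1) := by
            refine le_trans (setIntegral_le_integral ((hunint n).sub hu).norm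
              (Filter.Eventually.of_forall fun x => norm_nonneg _)) ?_
            calc (∫ x, ‖un n x - u x‖) = ∫ x, ‖u x - un n x‖ := by simp only [norm_sub_rev]
              _ ≤ 1/((n:ℝ)+1) := hun n
          have e2 : (∫ t in Ioc (0:ℝ) 1, ‖vn n t - v t‖) ≤ 1/((n:ℝ)+1) := by
            refine le_trans (setIntegral_le_integral ((hvnint n).sub hv).norm
              (Filter.Eventually.of_forall fun x => norm_nonneg _)) ?_
            calc (∫ x, ‖vn n x - v x‖) = ∫ x, ‖v x - vn n x‖ := by simp only [norm_sub_rev]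
              _ ≤ 1/((n:ℝ)+1) := hvn n
          exact add_le_add (mul_le_mul_of_nonneg_left e1 hC0) (mul_le_mul_of_nonneg_left e2 hC0)
  -- Step 3b : dominated convergence
  have h3b : Filter.Tendsto (fun n => ∫ t in Ioc (0:ℝ) 1,
        (u t * P₁ (An n t) (Bn n t) + v t * P₂ (An n t) (Bn n t))) atTop
      (nhds (∫ t in Ioc (0:ℝ) 1, (u t * P₁ (A t) (B t) + v t * P₂ (A t) (B t)))) := by
    refine tendsto_integral_of_dominated_convergence (fun t => C * ‖u t‖ + C * ‖v t‖)
      (fun n => ((hGnint n).aestronglyMeasurable)) ?_ ?_ ?_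
    · exact ((hu.norm.const_mul C).add (hv.norm.const_mul C)).restrict
    · intro n
      filter_upwards [hbddP₁ n, hbddP₂ n] with t h1 h2
      calc ‖u t * P₁ (An n t) (Bn n t) + v t * P₂ (An n t) (Bn n t)‖
          ≤ ‖u t * P₁ (An n t) (Bn n t)‖ + ‖v t * P₂ (An n t) (Bn n t)‖ := norm_add_le _ _
        _ = ‖u t‖ * ‖P₁ (An n t) (Bn n t)‖ + ‖v t‖ * ‖P₂ (An n t) (Bn n t)‖ := by
            rw [norm_mul, norm_mul]
        _ ≤ C * ‖u t‖ + C * ‖v t‖ := by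
            have e1 := mul_le_mul_of_nonneg_left h1 (norm_nonneg (u t))
            have e2 := mul_le_mul_of_nonneg_left h2 (norm_nonneg (v t))
            nlinarith [norm_nonneg (u t), norm_nonneg (v t)]
    · filter_upwards [ae_restrict_mem measurableSet_Ioc] with t ht
      have htIcc := Ioc_subset_Icc_self ht
      have htA : Filter.Tendsto (fun n => An n t) atTop (nhds (A t)) := by
        rw [← tendsto_sub_nhds_zero_iff]
        exact squeeze_zero_norm (fun n => hestA n t htIcc) tendsto_one_div_add_atTop_nhds_zero_nat
      have htB : Filter.Tendsto (fun n => Bn n t) atTop (nhds (B t)) := by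
        rw [← tendsto_sub_nhds_zero_iff]
        exact squeeze_zero_norm (fun n => hestB n t htIcc) tendsto_one_div_add_atTop_nhds_zero_nat
      have hP₁t : Filter.Tendsto (fun n => P₁ (An n t) (Bn n t)) atTop
          (nhds (P₁ (A t) (B t))) :=
        (hP₁.tendsto ((A t), (B t))).comp (htA.prodMk_nhds htB)
      have hP₂t : Filter.Tendsto (fun n => P₂ (An n t) (Bn n t)) atTop
          (nhds (P₂ (A t) (B t))) :=
        (hP₂.tendsto ((A t), (B t))).comp (htA.prodMk_nhds htB)
      exact (tendsto_const_nhds.mul hP₁t).add (tendsto_const_nhds.mul hP₂t)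
  -- assemble
  have hdiff0 : Filter.Tendsto (fun n =>
      (∫ t in Ioc (0:ℝ) 1, (un n t * P₁ (An n t) (Bn n t) + vn n t * P₂ (An n t) (Bn n t)))
      - ∫ t in Ioc (0:ℝ) 1, (u t * P₁ (An n t) (Bn n t) + v t * P₂ (An n t) (Bn n t)))
      atTop (nhds 0) := by
    refine squeeze_zero_norm h3a ?_
    have := (tendsto_one_div_add_atTop_nhds_zero_nat.const_mul C).add
      (tendsto_one_div_add_atTop_nhds_zero_nat.const_mul C)
    simpa using this
  have hlim1 : Filter.Tendsto (fun n => ∫ t in Ioc (0:ℝ) 1,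
      (un n t * P₁ (An n t) (Bn n t) + vn n t * P₂ (An n t) (Bn n t))) atTop
      (nhds (∫ t in Ioc (0:ℝ) 1, (u t * P₁ (A t) (B t) + v t * P₂ (A t) (B t)))) := by
    have := hdiff0.add h3b
    simpa using this
  have hlim2 : Filter.Tendsto (fun n => ∫ t in Ioc (0:ℝ) 1,
      (un n t * P₁ (An n t) (Bn n t) + vn n t * P₂ (An n t) (Bn n t))) atTop
      (nhds (P (A 1) (B 1) - P 0 0)) :=
    h2.congr (fun n => (hIn n).symm)
  exact tendsto_nhds_unique hlim1 hlim2

noncomputable def Pfun (x y : ℝ) : ℝ := Real.exp (-x) + (x - y - 1) * Real.exp (-y)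
noncomputable def P1fun (x y : ℝ) : ℝ := Real.exp (-y) - Real.exp (-x)
noncomputable def P2fun (x y : ℝ) : ℝ := -(x - y) * Real.exp (-y)

lemma hP1c : Continuous fun p : ℝ × ℝ => P1fun p.1 p.2 := by
  unfold P1fun; fun_prop

lemma hP2c : Continuous fun p : ℝ × ℝ => P2fun p.1 p.2 := by
  unfold P2fun; fun_prop

lemma hPderiv (p : ℝ × ℝ) : HasFDerivAt (fun q : ℝ × ℝ => Pfun q.1 q.2)
    (P1fun p.1 p.2 • ContinuousLinearMap.fst ℝ ℝ ℝ
      + P2fun p.1 p.2 • ContinuousLinearMap.snd ℝ ℝ ℝ) p := by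
  have hfst : HasFDerivAt (fun q : ℝ × ℝ => q.1) (ContinuousLinearMap.fst ℝ ℝ ℝ) p :=
    hasFDerivAt_fst
  have hsnd : HasFDerivAt (fun q : ℝ × ℝ => q.2) (ContinuousLinearMap.snd ℝ ℝ ℝ) p :=
    hasFDerivAt_snd
  have h1 := (hfst.neg).exp
  have h2 := (hsnd.neg).exp
  have h3 : HasFDerivAt (fun q : ℝ × ℝ => q.1 - q.2 - 1)
      (ContinuousLinearMap.fst ℝ ℝ ℝ - ContinuousLinearMap.snd ℝ ℝ ℝ) p :=
    (hfst.sub hsnd).sub_const 1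
  have h4 := h1.add (h3.mul h2)
  have heq : (fun q : ℝ × ℝ => Pfun q.1 q.2)
      = fun q : ℝ × ℝ => Real.exp (-q.1) + (q.1 - q.2 - 1) * Real.exp (-q.2) := by
    funext q; simp [Pfun]
  rw [heq]
  refine h4.congr_fderiv ?_
  refine ContinuousLinearMap.ext fun q => ?_
  simp [P1fun, P2fun, ContinuousLinearMap.smul_apply, ContinuousLinearMap.add_apply,
    ContinuousLinearMap.sub_apply, smul_eq_mul]
  ring

lemma exp_aux (x : ℝ) : 0 ≤ Real.exp (-x) + x - 1 := by
  have := Real.add_one_le_exp (-x)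
  linarith

lemma pt_ineq (x y : ℝ) (hx : 0 ≤ x) (hy : 0 ≤ y) :
    (Real.exp (-y) - Real.exp (-x))^2 ≤ (x - y) * (Real.exp (-y) - Real.exp (-x)) := by
  have key : ∀ p q : ℝ, 0 ≤ p → 0 ≤ q → q ≤ p →
      Real.exp (-q) - Real.exp (-p) ≤ p - q := by
    intro p q hp hq hqp
    have h1 : Real.exp (-q) ≤ 1 := by
      calc Real.exp (-q) ≤ Real.exp 0 := Real.exp_le_exp.2 (by linarith)
        _ = 1 := Real.exp_zero
    have h2 : Real.exp (-p) = Real.exp (-q) * Real.exp (q - p) := by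
      rw [← Real.exp_add]; ring_nf
    have h3 : (q - p) + 1 ≤ Real.exp (q - p) := Real.add_one_le_exp _
    have h4 : 0 < Real.exp (-q) := Real.exp_pos _
    nlinarith
  rcases le_total y x with h | h
  · have hs : 0 ≤ Real.exp (-y) - Real.exp (-x) := by
      have := Real.exp_le_exp.2 (neg_le_neg h); linarith
    have := key x y hx hy h
    nlinarith
  · have hs : Real.exp (-y) - Real.exp (-x) ≤ 0 := by
      have := Real.exp_le_exp.2 (neg_le_neg h); linarith
    have := key y x hy hx h
    nlinarith

theorem stmt_14
    (μ : Measure ℝ) (hμ : μ = volume.restrict (Set.Ioc (0:ℝ) 1))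
    (c₀ κ : ℝ) (hc₀ : 0 < c₀) (hκ : 0 < κ)
    (F : Lp ℝ 2 μ → Lp ℝ 2 μ)
    (hF : ∀ u : Lp ℝ 2 μ,
      (F u : ℝ → ℝ) =ᵐ[μ]
        fun t => -c₀ * Real.exp (-(∫ s in Set.Ioc (0:ℝ) t, u s))) :
    ∀ u : Lp ℝ 2 μ, (∀ᵐ t ∂μ, κ ≤ u t) →
      ∀ v : Lp ℝ 2 μ, (∀ᵐ t ∂μ, κ ≤ v t) →
        ⟪F u - F v, u - v⟫ ≥ κ / (2 * c₀) * ‖F u - F v‖ ^ 2 := by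
  subst hμ
  haveI : IsFiniteMeasure (volume.restrict (Set.Ioc (0:ℝ) 1)) := by
    constructor
    rw [Measure.restrict_apply_univ]
    simp [Real.volume_Ioc]
  intro u hu v hv
  have hu1 : Integrable (u : ℝ → ℝ) (volume.restrict (Set.Ioc (0:ℝ) 1)) :=
    (Lp.memLp u).integrable one_le_two
  have hv1 : Integrable (v : ℝ → ℝ) (volume.restrict (Set.Ioc (0:ℝ) 1)) :=
    (Lp.memLp v).integrable one_le_two
  set u' : ℝ → ℝ := (Set.Ioc (0:ℝ) 1).indicator u with hu'def
  set v' : ℝ → ℝ := (Set.Ioc (0:ℝ) 1).indicator v with hv'def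
  have hu'int : Integrable u' volume := (integrable_indicator_iff measurableSet_Ioc).2 hu1
  have hv'int : Integrable v' volume := (integrable_indicator_iff measurableSet_Ioc).2 hv1
  set A : ℝ → ℝ := fun t => ∫ s in (0:ℝ)..t, u' s with hAdef
  set B : ℝ → ℝ := fun t => ∫ s in (0:ℝ)..t, v' s with hBdef
  have hAc : Continuous A := hu'int.continuous_primitive 0
  have hBc : Continuous B := hv'int.continuous_primitive 0
  have hAeq : ∀ t ∈ Set.Ioc (0:ℝ) 1, A t = ∫ s in Set.Ioc (0:ℝ) t, (u : ℝ → ℝ) s := by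
    intro t ht
    show (∫ s in (0:ℝ)..t, u' s) = _
    rw [intervalIntegral.integral_of_le ht.1.le, hu'def,
      setIntegral_indicator measurableSet_Ioc, Set.Ioc_inter_Ioc]
    simp [min_eq_left ht.2]
  have hBeq : ∀ t ∈ Set.Ioc (0:ℝ) 1, B t = ∫ s in Set.Ioc (0:ℝ) t, (v : ℝ → ℝ) s := by
    intro t ht
    show (∫ s in (0:ℝ)..t, v' s) = _
    rw [intervalIntegral.integral_of_le ht.1.le, hv'def,
      setIntegral_indicator measurableSet_Ioc, Set.Ioc_inter_Ioc]
    simp [min_eq_left ht.2]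
  set a : ℝ → ℝ := fun t => Real.exp (-(A t)) with hadef
  set b : ℝ → ℝ := fun t => Real.exp (-(B t)) with hbdef
  have hac : Continuous a := Real.continuous_exp.comp hAc.neg
  have hbc : Continuous b := Real.continuous_exp.comp hBc.neg
  set G : ℝ → ℝ := fun t => a t + (A t - B t - 1) * b t with hGdef
  set H : ℝ → ℝ := fun t => b t + (B t - A t - 1) * a t with hHdef
  have hGc : Continuous G := hac.add (((hAc.sub hBc).sub continuous_const).mul hbc)
  have hHc : Continuous H := hbc.add (((hBc.sub hAc).sub continuous_const).mul hac)
  -- integrability helpers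
  have hmul : ∀ (g : ℝ → ℝ), Continuous g → ∀ (f : ℝ → ℝ),
      Integrable f (volume.restrict (Set.Ioc (0:ℝ) 1)) →
      Integrable (fun t => g t * f t) (volume.restrict (Set.Ioc (0:ℝ) 1)) := by
    intro g hg f hf
    obtain ⟨M, hM⟩ := isCompact_Icc.exists_bound_of_continuousOn
      (hg.continuousOn (s := Set.Icc (0:ℝ) 1))
    have hb : ∀ᵐ t ∂(volume.restrict (Set.Ioc (0:ℝ) 1)), ‖g t‖ ≤ M := by
      filter_upwards [ae_restrict_mem measurableSet_Ioc] with t ht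
      exact hM t (Set.Ioc_subset_Icc_self ht)
    exact Integrable.bdd_mul hf hg.aestronglyMeasurable.restrict hb
  have hmul' : ∀ (g : ℝ → ℝ), Continuous g → ∀ (f : ℝ → ℝ),
      Integrable f (volume.restrict (Set.Ioc (0:ℝ) 1)) →
      Integrable (fun t => f t * g t) (volume.restrict (Set.Ioc (0:ℝ) 1)) := by
    intro g hg f hf
    exact (hmul g hg f hf).congr (Filter.Eventually.of_forall fun t => mul_comm _ _)
  have hIint : Integrable (fun t => (b t - a t) * ((u : ℝ → ℝ) t - (v : ℝ → ℝ) t))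
      (volume.restrict (Set.Ioc (0:ℝ) 1)) := hmul _ (hbc.sub hac) _ (hu1.sub hv1)
  have hvGint : Integrable (fun t => (v : ℝ → ℝ) t * G t)
      (volume.restrict (Set.Ioc (0:ℝ) 1)) := hmul' G hGc _ hv1
  have huHint : Integrable (fun t => (u : ℝ → ℝ) t * H t)
      (volume.restrict (Set.Ioc (0:ℝ) 1)) := hmul' H hHc _ hu1
  have hGint : Integrable G (volume.restrict (Set.Ioc (0:ℝ) 1)) := hGc.integrableOn_Ioc
  have hHint : Integrable H (volume.restrict (Set.Ioc (0:ℝ) 1)) := hHc.integrableOn_Ioc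
  -- nonnegativity of G and H
  have hGnn : ∀ t, 0 ≤ G t := by
    intro t
    have h1 : a t = Real.exp (-(A t - B t)) * b t := by
      rw [hadef, hbdef, ← Real.exp_add]; ring_nf
    have h2 := exp_aux (A t - B t)
    have h3 : (0:ℝ) < b t := Real.exp_pos _
    show 0 ≤ a t + (A t - B t - 1) * b t
    nlinarith
  have hHnn : ∀ t, 0 ≤ H t := by
    intro t
    have h1 : b t = Real.exp (-(B t - A t)) * a t := by
      rw [hadef, hbdef, ← Real.exp_add]; ring_nf
    have h2 := exp_aux (B t - A t)
    have h3 : (0:ℝ) < a t := Real.exp_pos _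
    show 0 ≤ b t + (B t - A t - 1) * a t
    nlinarith
  -- the two FTC identities
  have eq1 : (∫ t in Set.Ioc (0:ℝ) 1, (u' t * P1fun (A t) (B t) + v' t * P2fun (A t) (B t)))
      = Pfun (A 1) (B 1) - Pfun 0 0 :=
    ftc_key u' v' hu'int hv'int Pfun P1fun P2fun hPderiv hP1c hP2c
  have eq2 : (∫ t in Set.Ioc (0:ℝ) 1, (v' t * P1fun (B t) (A t) + u' t * P2fun (B t) (A t)))
      = Pfun (B 1) (A 1) - Pfun 0 0 :=
    ftc_key v' u' hv'int hu'int Pfun P1fun P2fun hPderiv hP1c hP2c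
  have hP00 : Pfun 0 0 = 0 := by simp [Pfun]
  -- rewrite the identities with u, v in place of u', v'
  set I : ℝ := ∫ t in Set.Ioc (0:ℝ) 1, (b t - a t) * ((u : ℝ → ℝ) t - (v : ℝ → ℝ) t) with hIdef
  have claim1 : I = Pfun (A 1) (B 1) + ∫ t in Set.Ioc (0:ℝ) 1, (v : ℝ → ℝ) t * G t := by
    have hsub : I - (∫ t in Set.Ioc (0:ℝ) 1, (v : ℝ → ℝ) t * G t)
        = ∫ t in Set.Ioc (0:ℝ) 1,
            ((b t - a t) * ((u : ℝ → ℝ) t - (v : ℝ → ℝ) t) - (v : ℝ → ℝ) t * G t) :=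
      (integral_sub hIint hvGint).symm
    have hcongr : (∫ t in Set.Ioc (0:ℝ) 1,
          ((b t - a t) * ((u : ℝ → ℝ) t - (v : ℝ → ℝ) t) - (v : ℝ → ℝ) t * G t))
        = ∫ t in Set.Ioc (0:ℝ) 1, (u' t * P1fun (A t) (B t) + v' t * P2fun (A t) (B t)) := by
      refine integral_congr_ae ?_
      filter_upwards [ae_restrict_mem measurableSet_Ioc] with t ht
      rw [hu'def, hv'def, Set.indicator_of_mem ht, Set.indicator_of_mem ht]
      show (b t - a t) * ((u : ℝ → ℝ) t - (v : ℝ → ℝ) t)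
          - (v : ℝ → ℝ) t * (a t + (A t - B t - 1) * b t)
        = (u : ℝ → ℝ) t * (Real.exp (-(B t)) - Real.exp (-(A t)))
          + (v : ℝ → ℝ) t * (-(A t - B t) * Real.exp (-(B t)))
      rw [hadef, hbdef]
      ring
    rw [hcongr, eq1, hP00] at hsub
    linarith
  have claim2 : I = Pfun (B 1) (A 1) + ∫ t in Set.Ioc (0:ℝ) 1, (u : ℝ → ℝ) t * H t := by
    have hsub : I - (∫ t in Set.Ioc (0:ℝ) 1, (u : ℝ → ℝ) t * H t)
        = ∫ t in Set.Ioc (0:ℝ) 1,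
            ((b t - a t) * ((u : ℝ → ℝ) t - (v : ℝ → ℝ) t) - (u : ℝ → ℝ) t * H t) :=
      (integral_sub hIint huHint).symm
    have hcongr : (∫ t in Set.Ioc (0:ℝ) 1,
          ((b t - a t) * ((u : ℝ → ℝ) t - (v : ℝ → ℝ) t) - (u : ℝ → ℝ) t * H t))
        = ∫ t in Set.Ioc (0:ℝ) 1, (v' t * P1fun (B t) (A t) + u' t * P2fun (B t) (A t)) := by
      refine integral_congr_ae ?_
      filter_upwards [ae_restrict_mem measurableSet_Ioc] with t ht
      rw [hu'def, hv'def, Set.indicator_of_mem ht, Set.indicator_of_mem ht]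
      show (b t - a t) * ((u : ℝ → ℝ) t - (v : ℝ → ℝ) t)
          - (u : ℝ → ℝ) t * (b t + (B t - A t - 1) * a t)
        = (v : ℝ → ℝ) t * (Real.exp (-(A t)) - Real.exp (-(B t)))
          + (u : ℝ → ℝ) t * (-(B t - A t) * Real.exp (-(A t)))
      rw [hadef, hbdef]
      ring
    rw [hcongr, eq2, hP00] at hsub
    linarith
  -- lower bounds
  have hPG1 : 0 ≤ Pfun (A 1) (B 1) := hGnn 1
  have hPH1 : 0 ≤ Pfun (B 1) (A 1) := hHnn 1
  have claim3 : κ * (∫ t in Set.Ioc (0:ℝ) 1, G t)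
      ≤ ∫ t in Set.Ioc (0:ℝ) 1, (v : ℝ → ℝ) t * G t := by
    rw [← MeasureTheory.integral_const_mul]
    refine integral_mono_ae (hGint.const_mul κ) hvGint ?_
    filter_upwards [hv] with t htv
    exact mul_le_mul_of_nonneg_right htv (hGnn t)
  have claim4 : κ * (∫ t in Set.Ioc (0:ℝ) 1, H t)
      ≤ ∫ t in Set.Ioc (0:ℝ) 1, (u : ℝ → ℝ) t * H t := by
    rw [← MeasureTheory.integral_const_mul]
    refine integral_mono_ae (hHint.const_mul κ) huHint ?_
    filter_upwards [hu] with t htu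
    exact mul_le_mul_of_nonneg_right htu (hHnn t)
  -- G + H = (A-B)(b-a) and the quadratic bound
  have hGH : ∀ t, G t + H t = (A t - B t) * (b t - a t) := by
    intro t
    show (a t + (A t - B t - 1) * b t) + (b t + (B t - A t - 1) * a t) = _
    ring
  have hu'nn : 0 ≤ᵐ[volume] u' := by
    have h := (ae_restrict_iff' measurableSet_Ioc).1 hu
    filter_upwards [h] with s hs
    by_cases hmem : s ∈ Set.Ioc (0:ℝ) 1
    · rw [hu'def, Set.indicator_of_mem hmem]
      exact le_trans hκ.le (hs hmem)
    · rw [hu'def, Set.indicator_of_notMem hmem]; exact le_rfl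
  have hv'nn : 0 ≤ᵐ[volume] v' := by
    have h := (ae_restrict_iff' measurableSet_Ioc).1 hv
    filter_upwards [h] with s hs
    by_cases hmem : s ∈ Set.Ioc (0:ℝ) 1
    · rw [hv'def, Set.indicator_of_mem hmem]
      exact le_trans hκ.le (hs hmem)
    · rw [hv'def, Set.indicator_of_notMem hmem]; exact le_rfl
  have hAnn : ∀ t ∈ Set.Icc (0:ℝ) 1, 0 ≤ A t := fun t ht =>
    intervalIntegral.integral_nonneg_of_ae ht.1 hu'nn
  have hBnn : ∀ t ∈ Set.Icc (0:ℝ) 1, 0 ≤ B t := fun t ht =>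
    intervalIntegral.integral_nonneg_of_ae ht.1 hv'nn
  have claim6 : ∀ᵐ t ∂(volume.restrict (Set.Ioc (0:ℝ) 1)),
      (b t - a t)^2 ≤ (A t - B t) * (b t - a t) := by
    filter_upwards [ae_restrict_mem measurableSet_Ioc] with t ht
    have := pt_ineq (A t) (B t) (hAnn t (Set.Ioc_subset_Icc_self ht))
      (hBnn t (Set.Ioc_subset_Icc_self ht))
    show (b t - a t)^2 ≤ _
    rw [hadef, hbdef]
    exact this
  have hba2int : Integrable (fun t => (b t - a t)^2)
      (volume.restrict (Set.Ioc (0:ℝ) 1)) := ((hbc.sub hac).pow 2).integrableOn_Ioc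
  have hABbaint : Integrable (fun t => (A t - B t) * (b t - a t))
      (volume.restrict (Set.Ioc (0:ℝ) 1)) := ((hAc.sub hBc).mul (hbc.sub hac)).integrableOn_Ioc
  have step : (∫ t in Set.Ioc (0:ℝ) 1, (b t - a t)^2)
      ≤ ∫ t in Set.Ioc (0:ℝ) 1, (A t - B t) * (b t - a t) :=
    integral_mono_ae hba2int hABbaint claim6
  have sumGH : (∫ t in Set.Ioc (0:ℝ) 1, G t) + (∫ t in Set.Ioc (0:ℝ) 1, H t)
      = ∫ t in Set.Ioc (0:ℝ) 1, (A t - B t) * (b t - a t) := by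
    rw [← integral_add hGint hHint]
    exact integral_congr_ae (Filter.Eventually.of_forall fun t => hGH t)
  set S : ℝ := ∫ t in Set.Ioc (0:ℝ) 1, (b t - a t)^2 with hSdef
  have c3 : κ * S ≤ 2 * I := by
    have h1 : κ * (∫ t in Set.Ioc (0:ℝ) 1, G t) ≤ I - Pfun (A 1) (B 1) := by
      rw [claim1]; linarith [claim3]
    have h2 : κ * (∫ t in Set.Ioc (0:ℝ) 1, H t) ≤ I - Pfun (B 1) (A 1) := by
      rw [claim2]; linarith [claim4]
    have h3 : κ * ((∫ t in Set.Ioc (0:ℝ) 1, G t) + ∫ t in Set.Ioc (0:ℝ) 1, H t) ≤ 2 * I := by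
      rw [mul_add]; linarith
    rw [sumGH] at h3
    have h4 : κ * S ≤ κ * ∫ t in Set.Ioc (0:ℝ) 1, (A t - B t) * (b t - a t) :=
      mul_le_mul_of_nonneg_left step hκ.le
    linarith
  -- identify inner product and norm
  have hFsub : (F u - F v : Lp ℝ 2 (volume.restrict (Set.Ioc (0:ℝ) 1))) =ᵐ[volume.restrict (Set.Ioc (0:ℝ) 1)]
      fun t => c₀ * (b t - a t) := by
    filter_upwards [Lp.coeFn_sub (F u) (F v), hF u, hF v, ae_restrict_mem measurableSet_Ioc]
      with t h1 h2 h3 ht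
    rw [h1, Pi.sub_apply, h2, h3, ← hAeq t ht, ← hBeq t ht]
    show -c₀ * Real.exp (-(A t)) - -c₀ * Real.exp (-(B t)) = c₀ * (b t - a t)
    rw [hadef, hbdef]
    ring
  have hinner : ⟪F u - F v, u - v⟫
      = ∫ t in Set.Ioc (0:ℝ) 1, (c₀ * (b t - a t)) * ((u : ℝ → ℝ) t - (v : ℝ → ℝ) t) := by
    rw [MeasureTheory.L2.inner_def]
    refine integral_congr_ae ?_
    filter_upwards [hFsub, Lp.coeFn_sub u v] with t h1 h2
    rw [RCLike.inner_apply, conj_trivial, h1, h2, Pi.sub_apply]; ring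
  have hnorm : ‖(F u - F v : Lp ℝ 2 (volume.restrict (Set.Ioc (0:ℝ) 1)))‖ ^ 2
      = ∫ t in Set.Ioc (0:ℝ) 1, (c₀ * (b t - a t))^2 := by
    rw [← real_inner_self_eq_norm_sq, MeasureTheory.L2.inner_def]
    refine integral_congr_ae ?_
    filter_upwards [hFsub] with t h1
    rw [RCLike.inner_apply, conj_trivial, h1]
    ring
  have hinner' : ⟪F u - F v, u - v⟫ = c₀ * I := by
    rw [hinner, hIdef, ← MeasureTheory.integral_const_mul]
    refine integral_congr_ae (Filter.Eventually.of_forall fun t => ?_)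
    ring
  have hnorm' : ‖(F u - F v : Lp ℝ 2 (volume.restrict (Set.Ioc (0:ℝ) 1)))‖ ^ 2 = c₀^2 * S := by
    rw [hnorm, hSdef, ← MeasureTheory.integral_const_mul]
    refine integral_congr_ae (Filter.Eventually.of_forall fun t => ?_)
    ring
  rw [ge_iff_le, hinner', hnorm']
  have hfin : κ / (2 * c₀) * (c₀^2 * S) = c₀ * (κ * S / 2) := by
    field_simp
  rw [hfin]
  have : κ * S / 2 ≤ I := by linarith
  exact mul_le_mul_of_nonneg_left this hc₀.le
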